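/- arXiv:2407.05136 — 2 statements merged into one kernel-verified Lean document; each statement's English description precedes it below -/
import Mathlib

section
/- There exists a strictly increasing sequence of indices (n_j) such that lim_{j→∞} sup_{(α,x,y)∈E} φ_{n_j}(α, x, y) = sup_{(α,x,y)∈E} αᵀKα = 1. -/
open Matrix Filter

section Aux

variable {m : ℕ}

lemma aux_vecMulVec_mulVec (v x : Fin m → ℝ) :
    vecMulVec v v *ᵥ x = (v ⬝ᵥ x) • v := by
  funext i
  simp only [mulVec, dotProduct, vecMulVec_apply, Pi.smul_apply, smul_eq_mul,
    Finset.sum_mul]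
  exact Finset.sum_congr rfl fun j _ => by ring

lemma aux_posdef_add {K : Matrix (Fin m) (Fin m) ℝ} (hK : K.PosDef)
    (t : ℝ) (ht : 0 ≤ t) (v : Fin m → ℝ) :
    (K + t • vecMulVec v v).PosDef := by
  rw [posDef_iff_dotProduct_mulVec]
  constructor
  · have hKs : ∀ i j, K j i = K i j := fun i j => by
      conv_rhs => rw [← hK.1]
      simp [conjTranspose_apply]
    ext i j
    simp [conjTranspose_apply, vecMulVec_apply, hKs i j, mul_comm, mul_left_comm]
  · intro x hx
    have h1 := hK.dotProduct_mulVec_pos hx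
    have h2 : star x ⬝ᵥ (K + t • vecMulVec v v) *ᵥ x
        = star x ⬝ᵥ K *ᵥ x + t * ((v ⬝ᵥ x) * (x ⬝ᵥ v)) := by
      rw [add_mulVec, dotProduct_add, smul_mulVec, aux_vecMulVec_mulVec,
        dotProduct_smul, dotProduct_smul]
      simp [smul_eq_mul, star_trivial, mul_comm, mul_left_comm]
    rw [h2]
    have h3 : 0 ≤ t * ((v ⬝ᵥ x) * (x ⬝ᵥ v)) := by
      rw [dotProduct_comm x v]
      exact mul_nonneg ht (mul_self_nonneg _)
    exact add_pos_of_pos_of_nonneg h1 h3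

lemma aux_sqrt_inv (c : ℝ) (hc : 0 < c) : (Real.sqrt c)⁻¹ * ((Real.sqrt c)⁻¹ * c) = 1 := by
  rw [← mul_assoc, ← mul_inv, Real.mul_self_sqrt hc.le]
  exact inv_mul_cancel₀ hc.ne'

end Aux

/-- There is a strictly increasing sequence of indices `(n_j)` such that
`lim_j sup_{(α,x,y)∈E} φ_{n_j}(α,x,y) = sup_{(α,x,y)∈E} αᵀKα = 1`. -/
theorem stmt_7 {m I : ℕ} (hm : 1 ≤ m)
    (X : Set (Fin I → ℝ)) (hX : X.Nonempty)
    (k : (Fin I → ℝ) → (Fin m → ℝ)) (hk : ContinuousOn k X)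
    (K : Matrix (Fin m) (Fin m) ℝ) (hK : K.PosDef)
    (ρ : ℕ → ℝ) (hρpos : ∀ n, 0 < ρ n) (hρ : Tendsto ρ atTop atTop)
    (E : Set ((Fin m → ℝ) × (Fin I → ℝ) × ℝ))
    (hE : E = {p | p.2.1 ∈ X ∧
      p.1 ⬝ᵥ K *ᵥ p.1 + p.2.2 ^ 2 * (k p.2.1 ⬝ᵥ K *ᵥ k p.2.1) = 1})
    (hEc : IsCompact E)
    (φ1 : ℕ → ((Fin m → ℝ) × (Fin I → ℝ) × ℝ) → (Fin m → ℝ))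
    (hφ1 : ∀ n p, φ1 n p = (p.2.2 / ρ n) • k p.2.1 + K *ᵥ p.1)
    (φ2 : ℕ → ((Fin m → ℝ) × (Fin I → ℝ) × ℝ) → Matrix (Fin m) (Fin m) ℝ)
    (hφ2 : ∀ n p, φ2 n p = (K + (ρ n)⁻¹ • vecMulVec (k p.2.1) (k p.2.1))⁻¹)
    (φ : ℕ → ((Fin m → ℝ) × (Fin I → ℝ) × ℝ) → ℝ)
    (hφ : ∀ n p, φ n p = φ1 n p ⬝ᵥ (φ2 n p * K * φ2 n p) *ᵥ φ1 n p) :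
    ∃ ns : ℕ → ℕ, StrictMono ns ∧
      sSup ((fun p : (Fin m → ℝ) × (Fin I → ℝ) × ℝ => p.1 ⬝ᵥ K *ᵥ p.1) '' E) = 1 ∧
      Tendsto (fun j => sSup (φ (ns j) '' E)) atTop
        (nhds (sSup ((fun p : (Fin m → ℝ) × (Fin I → ℝ) × ℝ => p.1 ⬝ᵥ K *ᵥ p.1) '' E))) := by
  classical
  set f : (Fin m → ℝ) × (Fin I → ℝ) × ℝ → ℝ := fun p => p.1 ⬝ᵥ K *ᵥ p.1 with hf
  -- a point of E with f = 1
  obtain ⟨x0, hx0⟩ := hX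
  set i0 : Fin m := ⟨0, hm⟩
  set e : Fin m → ℝ := Pi.single i0 1 with he
  have hene : e ≠ 0 := by
    intro h
    have := congrFun h i0
    simp [he] at this
  set c : ℝ := e ⬝ᵥ K *ᵥ e with hc
  have hcpos : 0 < c := by simpa using hK.dotProduct_mulVec_pos hene
  set α0 : Fin m → ℝ := (Real.sqrt c)⁻¹ • e with hα0def
  have hα0 : α0 ⬝ᵥ K *ᵥ α0 = 1 := by
    rw [hα0def]
    simp only [smul_dotProduct, mulVec_smul, dotProduct_smul, smul_eq_mul]
    rw [← hc]
    exact aux_sqrt_inv c hcpos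
  set p0 : (Fin m → ℝ) × (Fin I → ℝ) × ℝ := (α0, x0, 0) with hp0def
  have hp0 : p0 ∈ E := by
    rw [hE]
    refine ⟨hx0, ?_⟩
    show α0 ⬝ᵥ K *ᵥ α0 + (0:ℝ) ^ 2 * _ = 1
    rw [hα0]; ring
  have hEne : E.Nonempty := ⟨p0, hp0⟩
  have hKnn : ∀ v : Fin m → ℝ, 0 ≤ v ⬝ᵥ K *ᵥ v := fun v => by
    simpa using hK.posSemidef.dotProduct_mulVec_nonneg v
  have hfle : ∀ p ∈ E, f p ≤ 1 := by
    intro p hp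
    rw [hE] at hp
    have h2 := hp.2
    have h3 := hKnn (k p.2.1)
    have h4 := sq_nonneg p.2.2
    rw [hf]
    nlinarith
  have hfp0 : f p0 = 1 := hα0
  -- the sup equals 1
  have hsup : sSup (f '' E) = 1 := by
    apply le_antisymm
    · exact csSup_le (hEne.image f) (by rintro q ⟨p, hp, rfl⟩; exact hfle p hp)
    · refine le_csSup ⟨1, ?_⟩ ⟨p0, hp0, hfp0⟩
      rintro q ⟨p, hp, rfl⟩; exact hfle p hp
  -- the parametrized family g
  set g : ℝ → (Fin m → ℝ) × (Fin I → ℝ) × ℝ → ℝ := fun t p =>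
    ((t * p.2.2) • k p.2.1 + K *ᵥ p.1) ⬝ᵥ
      (((K + t • vecMulVec (k p.2.1) (k p.2.1))⁻¹ * K *
        (K + t • vecMulVec (k p.2.1) (k p.2.1))⁻¹) *ᵥ
        ((t * p.2.2) • k p.2.1 + K *ᵥ p.1)) with hg
  have hφg : ∀ n p, φ n p = g ((ρ n)⁻¹) p := by
    intro n p
    rw [hφ, hφ1, hφ2, hg]
    have : p.2.2 / ρ n = (ρ n)⁻¹ * p.2.2 := by
      rw [div_eq_mul_inv, mul_comm]
    rw [this]
  have hKdet : IsUnit K.det := hK.det_pos.ne'.isUnit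
  have hg0 : ∀ p, g 0 p = f p := by
    intro p
    rw [hg, hf]
    simp only [zero_mul, zero_smul, zero_add, add_zero]
    have h2 : ((K⁻¹ * K * K⁻¹) * K) *ᵥ p.1 = p.1 := by
      rw [Matrix.nonsing_inv_mul K hKdet, Matrix.one_mul,
        Matrix.nonsing_inv_mul K hKdet, one_mulVec]
    rw [mulVec_mulVec, h2]
    exact dotProduct_comm _ _
  -- continuity of g on Icc 0 1 ×ˢ E
  have hScomp : IsCompact (Set.Icc (0:ℝ) 1 ×ˢ E) := isCompact_Icc.prod hEc
  have hmemX : ∀ z : ↥(Set.Icc (0:ℝ) 1 ×ˢ E),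
      (z : ℝ × (Fin m → ℝ) × (Fin I → ℝ) × ℝ).2.2.1 ∈ X := by
    rintro ⟨⟨t, p⟩, hmem⟩
    have hz : p ∈ E := hmem.2
    rw [hE] at hz
    exact hz.1
  have hkc : Continuous fun z : ↥(Set.Icc (0:ℝ) 1 ×ˢ E) =>
      k (z : ℝ × (Fin m → ℝ) × (Fin I → ℝ) × ℝ).2.2.1 :=
    hk.comp_continuous (continuous_subtype_val.snd.snd.fst) hmemX
  have htc : Continuous fun z : ↥(Set.Icc (0:ℝ) 1 ×ˢ E) =>
      (z : ℝ × (Fin m → ℝ) × (Fin I → ℝ) × ℝ).1 := continuous_subtype_val.fst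
  have hyc : Continuous fun z : ↥(Set.Icc (0:ℝ) 1 ×ˢ E) =>
      (z : ℝ × (Fin m → ℝ) × (Fin I → ℝ) × ℝ).2.2.2 :=
    continuous_subtype_val.snd.snd.snd
  have hαc : Continuous fun z : ↥(Set.Icc (0:ℝ) 1 ×ˢ E) =>
      (z : ℝ × (Fin m → ℝ) × (Fin I → ℝ) × ℝ).2.1 := continuous_subtype_val.snd.fst
  set A : ↥(Set.Icc (0:ℝ) 1 ×ˢ E) → Matrix (Fin m) (Fin m) ℝ := fun z =>
    K + (z : ℝ × (Fin m → ℝ) × (Fin I → ℝ) × ℝ).1 •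
      vecMulVec (k (z : ℝ × (Fin m → ℝ) × (Fin I → ℝ) × ℝ).2.2.1)
        (k (z : ℝ × (Fin m → ℝ) × (Fin I → ℝ) × ℝ).2.2.1) with hA
  have hAc : Continuous A := continuous_const.add (htc.smul (hkc.matrix_vecMulVec hkc))
  have hAdet : ∀ z, (A z).det ≠ 0 := by
    intro z
    have ht0 : 0 ≤ (z : ℝ × (Fin m → ℝ) × (Fin I → ℝ) × ℝ).1 := z.2.1.1
    exact (aux_posdef_add hK _ ht0 _).det_pos.ne'
  have hMc : Continuous fun z => (A z)⁻¹ := by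
    rw [continuous_iff_continuousAt]
    intro z
    have hRI : ContinuousAt Ring.inverse (A z).det := by
      rw [Ring.inverse_eq_inv']
      exact continuousAt_inv₀ (hAdet z)
    exact (continuousAt_matrix_inv (A z) hRI).comp hAc.continuousAt
  set v1 : ↥(Set.Icc (0:ℝ) 1 ×ˢ E) → Fin m → ℝ := fun z =>
    ((z : ℝ × (Fin m → ℝ) × (Fin I → ℝ) × ℝ).1 *
        (z : ℝ × (Fin m → ℝ) × (Fin I → ℝ) × ℝ).2.2.2) •
      k (z : ℝ × (Fin m → ℝ) × (Fin I → ℝ) × ℝ).2.2.1 +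
      K *ᵥ (z : ℝ × (Fin m → ℝ) × (Fin I → ℝ) × ℝ).2.1 with hv1
  have hv1c : Continuous v1 :=
    ((htc.mul hyc).smul hkc).add (continuous_const.matrix_mulVec hαc)
  have hgc : Continuous fun z : ↥(Set.Icc (0:ℝ) 1 ×ˢ E) =>
      g (z : ℝ × (Fin m → ℝ) × (Fin I → ℝ) × ℝ).1
        (z : ℝ × (Fin m → ℝ) × (Fin I → ℝ) × ℝ).2 :=
    hv1c.dotProduct
      (((hMc.matrix_mul continuous_const).matrix_mul hMc).matrix_mulVec hv1c)
  have hgS : ContinuousOn (↿g) (Set.Icc (0:ℝ) 1 ×ˢ E) :=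
    continuousOn_iff_continuous_restrict.mpr hgc
  have huc : UniformContinuousOn (↿g) (Set.Icc (0:ℝ) 1 ×ˢ E) :=
    hScomp.uniformContinuousOn_of_continuous hgS
  have htu : TendstoUniformlyOn g (g 0) (nhdsWithin 0 (Set.Icc (0:ℝ) 1)) E :=
    huc.tendstoUniformlyOn (Set.left_mem_Icc.mpr zero_le_one)
  have hti : Tendsto (fun n => (ρ n)⁻¹) atTop (nhdsWithin 0 (Set.Icc (0:ℝ) 1)) := by
    rw [tendsto_nhdsWithin_iff]
    constructor
    · exact hρ.inv_tendsto_atTop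
    · filter_upwards [hρ.eventually_ge_atTop 1] with n hn
      exact ⟨inv_nonneg.mpr (hρpos n).le, inv_le_one_of_one_le₀ hn⟩
  have hun : TendstoUniformlyOn (fun n => g ((ρ n)⁻¹)) (g 0) atTop E :=
    fun u hu => hti.eventually (htu u hu)
  have hunφ : TendstoUniformlyOn (fun n => φ n) (g 0) atTop E := by
    intro u hu
    filter_upwards [hun u hu] with n hn p hp
    rw [hφg]
    exact hn p hp
  -- conclude
  refine ⟨id, strictMono_id, hsup, ?_⟩
  rw [hsup]
  show Tendsto (fun j => sSup (φ j '' E)) atTop (nhds 1)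
  rw [Metric.tendstoUniformlyOn_iff] at hunφ
  rw [Metric.tendsto_atTop]
  intro ε hε
  obtain ⟨N, hN⟩ := eventually_atTop.mp (hunφ (ε / 2) (by positivity))
  refine ⟨N, fun n hn => ?_⟩
  have hclose : ∀ p ∈ E, dist (g 0 p) (φ n p) < ε / 2 := hN n hn
  have hub : ∀ q ∈ φ n '' E, q ≤ 1 + ε / 2 := by
    rintro q ⟨p, hp, rfl⟩
    have h1 := hclose p hp
    rw [Real.dist_eq, abs_sub_lt_iff] at h1
    have h2 : g 0 p ≤ 1 := (hg0 p) ▸ hfle p hp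
    linarith [h1.2]
  have hbdd : BddAbove (φ n '' E) := ⟨1 + ε / 2, hub⟩
  have hlow : 1 - ε / 2 < φ n p0 := by
    have h1 := hclose p0 hp0
    rw [Real.dist_eq, abs_sub_lt_iff] at h1
    have h2 : g 0 p0 = 1 := (hg0 p0).trans hfp0
    linarith [h1.1]
  have hs1 : sSup (φ n '' E) ≤ 1 + ε / 2 := csSup_le (hEne.image _) hub
  have hs2 : 1 - ε / 2 < sSup (φ n '' E) :=
    lt_of_lt_of_le hlow (le_csSup hbdd ⟨p0, hp0, rfl⟩)
  rw [Real.dist_eq, abs_sub_lt_iff]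
  constructor <;> linarith
end

section
/- Assume in addition that λ_max(K) ≤ 1 and that E is contained in the closed Euclidean unit ball of ℝ^{2m}. Then lim_{n→∞} sup_{α ∈ E} φ_n(α) = sup_{α ∈ E} αᵀKα ≤ 1. -/
open Matrix Filter

lemma aux_sSup_tendsto {X : Type*} {F : ℕ → X → ℝ} {f : X → ℝ} {E : Set X}
    (hne : E.Nonempty) (hbdd : BddAbove (f '' E))
    (h : TendstoUniformlyOn F f atTop E) :
    Tendsto (fun n => sSup (F n '' E)) atTop (nhds (sSup (f '' E))) := by
  rw [Metric.tendsto_atTop]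
  intro ε hε
  obtain ⟨N, hN⟩ := eventually_atTop.mp ((Metric.tendstoUniformlyOn_iff.mp h) (ε/4) (by linarith))
  refine ⟨N, fun n hn => ?_⟩
  have hd : ∀ x ∈ E, |f x - F n x| < ε/4 := fun x hx => by
    have := hN n hn x hx; rwa [Real.dist_eq] at this
  have hb2 : BddAbove (F n '' E) := by
    refine ⟨sSup (f '' E) + ε/4, ?_⟩
    rintro y ⟨x, hx, rfl⟩
    have h1 : F n x ≤ f x + ε/4 := by have := hd x hx; cases abs_lt.mp this; linarith
    exact h1.trans (by gcongr; exact le_csSup hbdd ⟨x, hx, rfl⟩)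
  have hub : sSup (F n '' E) ≤ sSup (f '' E) + ε/4 := by
    refine csSup_le (hne.image _) ?_
    rintro y ⟨x, hx, rfl⟩
    have h1 : F n x ≤ f x + ε/4 := by have := hd x hx; cases abs_lt.mp this; linarith
    exact h1.trans (by gcongr; exact le_csSup hbdd ⟨x, hx, rfl⟩)
  have hlb : sSup (f '' E) ≤ sSup (F n '' E) + ε/4 := by
    refine csSup_le (hne.image _) ?_
    rintro y ⟨x, hx, rfl⟩
    have h1 : f x ≤ F n x + ε/4 := by have := hd x hx; cases abs_lt.mp this; linarith
    exact h1.trans (by gcongr; exact le_csSup hb2 ⟨x, hx, rfl⟩)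
  rw [Real.dist_eq, abs_lt]
  constructor <;> linarith

lemma aux_quad_le {n : Type*} [Fintype n] [DecidableEq n]
    {A : Matrix n n ℝ} (hA : A.IsHermitian)
    (h : ∀ i, hA.eigenvalues i ≤ 1) (α : n → ℝ) :
    α ⬝ᵥ A *ᵥ α ≤ α ⬝ᵥ α := by
  set U : Matrix n n ℝ := (hA.eigenvectorUnitary : Matrix n n ℝ) with hUdef
  have hU : U * star U = 1 := Matrix.mem_unitaryGroup_iff.mp (hA.eigenvectorUnitary).2
  have hst : star U = Uᵀ := by
    rw [Matrix.star_eq_conjTranspose, conjTranspose_eq_transpose_of_trivial]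
  rw [hst] at hU
  have hspec := hA.spectral_theorem
  set lam : n → ℝ := hA.eigenvalues
  have hdiag : (RCLike.ofReal ∘ lam : n → ℝ) = lam := by
    funext i; simp [RCLike.ofReal]
  set β := Uᵀ *ᵥ α with hβ
  have key : α ⬝ᵥ A *ᵥ α = β ⬝ᵥ (diagonal lam) *ᵥ β := by
    conv_lhs => rw [hspec]
    rw [Unitary.conjStarAlgAut_apply, ← hUdef, hst, hdiag, ← Matrix.mulVec_mulVec, ← Matrix.mulVec_mulVec,
      Matrix.dotProduct_mulVec, ← Matrix.mulVec_transpose, hβ]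
  have hββ : β ⬝ᵥ β = α ⬝ᵥ α := by
    rw [hβ, Matrix.dotProduct_mulVec, Matrix.vecMul_transpose, Matrix.mulVec_mulVec, hU,
      Matrix.one_mulVec]
  rw [key, ← hββ]
  simp only [dotProduct, Matrix.mulVec_diagonal]
  apply Finset.sum_le_sum
  intro i _
  have : β i * (lam i * β i) = lam i * (β i * β i) := by ring
  rw [this]
  exact mul_le_of_le_one_left (mul_self_nonneg _) (h i)

set_option maxHeartbeats 1000000 in
/-- With the fusion-center squared-norm functionals `φ_n`, if `λ_max(K) ≤ 1`
and `E` is contained in the closed Euclidean unit ball of `ℝ^{2m}`, then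
`lim_n sup_{α∈E} φ_n(α) = sup_{α∈E} αᵀKα ≤ 1`. Vectors in `ℝ^{2m}` are indexed by
`Fin m ⊕ Fin m`, with blocks `α¹ = α ∘ Sum.inl` and `α² = α ∘ Sum.inr`. -/
theorem stmt_9 {m : ℕ} (hm : 1 ≤ m)
    (K : Matrix (Fin m ⊕ Fin m) (Fin m ⊕ Fin m) ℝ) (hK : K.PosDef)
    (K1 K2 : Matrix (Fin m) (Fin m) ℝ) (hK1 : K1.PosSemidef) (hK2 : K2.PosSemidef)
    (ρ : ℕ → ℝ) (hρpos : ∀ n, 0 < ρ n) (hρmono : Monotone ρ)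
    (hρ : Tendsto ρ atTop atTop)
    (E : Set ((Fin m ⊕ Fin m) → ℝ)) (hEc : IsCompact E)
    (φ1 : ℕ → ((Fin m ⊕ Fin m) → ℝ) → ((Fin m ⊕ Fin m) → ℝ))
    (hφ1 : ∀ n α, φ1 n α = Kᵀ *ᵥ Sum.elim
      ((ρ n)⁻¹ • (K1 *ᵥ (α ∘ Sum.inl)) + α ∘ Sum.inl)
      ((ρ n)⁻¹ • (K2 *ᵥ (α ∘ Sum.inr)) + α ∘ Sum.inr))
    (φ2 : ℕ → Matrix (Fin m ⊕ Fin m) (Fin m ⊕ Fin m) ℝ)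
    (hφ2 : ∀ n, φ2 n = ((ρ n)⁻¹ • (Kᵀ * K) + K)⁻¹)
    (φ : ℕ → ((Fin m ⊕ Fin m) → ℝ) → ℝ)
    (hφ : ∀ n α, φ n α = φ1 n α ⬝ᵥ (φ2 n * K * φ2 n) *ᵥ φ1 n α)
    (hlmax : ∀ i, hK.isHermitian.eigenvalues i ≤ 1)
    (hEball : ∀ α ∈ E, α ⬝ᵥ α ≤ 1) :
    Tendsto (fun n => sSup (φ n '' E)) atTop
      (nhds (sSup ((fun α => α ⬝ᵥ K *ᵥ α) '' E))) ∧
    sSup ((fun α => α ⬝ᵥ K *ᵥ α) '' E) ≤ 1 := by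
  classical
  have hKs : Kᵀ = K := by
    have h := hK.isHermitian
    rwa [Matrix.IsHermitian, conjTranspose_eq_transpose_of_trivial] at h
  -- quadratic form bound
  have hquad : ∀ α ∈ E, α ⬝ᵥ K *ᵥ α ≤ 1 := fun α hα =>
    (aux_quad_le hK.isHermitian hlmax α).trans (hEball α hα)
  have hsup1 : sSup ((fun α => α ⬝ᵥ K *ᵥ α) '' E) ≤ 1 := by
    refine Real.sSup_le ?_ zero_le_one
    rintro y ⟨x, hx, rfl⟩
    exact hquad x hx
  refine ⟨?_, hsup1⟩
  -- the family
  set A : ℝ → Matrix (Fin m ⊕ Fin m) (Fin m ⊕ Fin m) ℝ :=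
    fun t => t • (Kᵀ * K) + K with hAdef
  have hApd : ∀ t ∈ Set.Icc (0:ℝ) 1, (A t).PosDef := by
    intro t ht
    have h1 : (Kᵀ * K).PosSemidef := by
      have h2 := Matrix.posSemidef_conjTranspose_mul_self K
      rwa [conjTranspose_eq_transpose_of_trivial] at h2
    have h3 : (t • (Kᵀ * K)).PosSemidef := by
      refine ⟨?_, fun x => ?_⟩
      · unfold Matrix.IsHermitian
        rw [Matrix.conjTranspose_smul, h1.isHermitian.eq]
        simp
      · have h4 := h1.2 x
        have h5 : (x.sum fun i xi => x.sum fun j xj => star xi * (t • (Kᵀ * K)) i j * xj) =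
            t * (x.sum fun i xi => x.sum fun j xj => star xi * (Kᵀ * K) i j * xj) := by
          simp only [Finsupp.sum, Finset.mul_sum, Matrix.smul_apply, smul_eq_mul]
          exact Finset.sum_congr rfl fun i _ => Finset.sum_congr rfl fun j _ => by ring
        rw [h5]
        exact mul_nonneg ht.1 h4
    exact Matrix.PosDef.posSemidef_add h3 hK
  have hdet : ∀ t ∈ Set.Icc (0:ℝ) 1, (A t).det ≠ 0 := fun t ht => (hApd t ht).det_pos.ne'
  set G : ℝ → Matrix (Fin m ⊕ Fin m) (Fin m ⊕ Fin m) ℝ :=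
    fun t => ((A t).det)⁻¹ • (A t).adjugate with hGdef
  have hGinv : ∀ t, G t = (A t)⁻¹ := fun t => by
    rw [Matrix.inv_def, Ring.inverse_eq_inv]
  set Fc : ℝ → ((Fin m ⊕ Fin m) → ℝ) → ℝ := fun t α =>
    (Kᵀ *ᵥ Sum.elim (t • (K1 *ᵥ (α ∘ Sum.inl)) + α ∘ Sum.inl)
        (t • (K2 *ᵥ (α ∘ Sum.inr)) + α ∘ Sum.inr)) ⬝ᵥ
      (G t * K * G t) *ᵥ
    (Kᵀ *ᵥ Sum.elim (t • (K1 *ᵥ (α ∘ Sum.inl)) + α ∘ Sum.inl)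
        (t • (K2 *ᵥ (α ∘ Sum.inr)) + α ∘ Sum.inr)) with hFcdef
  have hφF : ∀ n, φ n = Fc ((ρ n)⁻¹) := by
    intro n
    funext α
    rw [hφ, hφ1, hφ2]
    simp only [hFcdef, hGinv, hAdef]
  -- value at 0
  have hF0 : Fc 0 = fun α => α ⬝ᵥ K *ᵥ α := by
    funext α
    have hA0 : A 0 = K := by rw [hAdef]; simp
    have hG0 : G 0 = K⁻¹ := by rw [hGinv, hA0]
    have hdetK : IsUnit K.det := isUnit_iff_ne_zero.mpr hK.det_pos.ne'
    have helim : Sum.elim ((0:ℝ) • (K1 *ᵥ (α ∘ Sum.inl)) + α ∘ Sum.inl)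
        ((0:ℝ) • (K2 *ᵥ (α ∘ Sum.inr)) + α ∘ Sum.inr) = α := by
      funext i; cases i <;> simp
    rw [hFcdef]
    simp only [helim, hG0, hKs]
    have hmat : K⁻¹ * K * K⁻¹ = K⁻¹ := by
      rw [Matrix.nonsing_inv_mul K hdetK, Matrix.one_mul]
    rw [hmat, Matrix.mulVec_mulVec, Matrix.nonsing_inv_mul K hdetK,
      Matrix.one_mulVec, dotProduct_comm]
  -- continuity
  set S : Set (ℝ × ((Fin m ⊕ Fin m) → ℝ)) := Set.Icc (0:ℝ) 1 ×ˢ Set.univ with hSdef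
  have hvcont : Continuous (fun p : ℝ × ((Fin m ⊕ Fin m) → ℝ) =>
      Kᵀ *ᵥ Sum.elim (p.1 • (K1 *ᵥ (p.2 ∘ Sum.inl)) + p.2 ∘ Sum.inl)
        (p.1 • (K2 *ᵥ (p.2 ∘ Sum.inr)) + p.2 ∘ Sum.inr)) := by
    refine Continuous.matrix_mulVec continuous_const ?_
    refine continuous_pi fun i => ?_
    cases i with
    | inl j =>
        simp only [Sum.elim_inl, Pi.add_apply, Pi.smul_apply, smul_eq_mul,
          Matrix.mulVec, dotProduct, Function.comp_apply]
        fun_prop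
    | inr j =>
        simp only [Sum.elim_inr, Pi.add_apply, Pi.smul_apply, smul_eq_mul,
          Matrix.mulVec, dotProduct, Function.comp_apply]
        fun_prop
  have hAcont : Continuous (fun p : ℝ × ((Fin m ⊕ Fin m) → ℝ) => A p.1) := by
    rw [hAdef]
    exact (continuous_fst.smul continuous_const).add continuous_const
  have hGcont : ContinuousOn (fun p : ℝ × ((Fin m ⊕ Fin m) → ℝ) => G p.1) S := by
    refine ContinuousOn.fun_smul ?_ hAcont.matrix_adjugate.continuousOn
    exact (hAcont.matrix_det.continuousOn).inv₀ fun p hp => hdet _ hp.1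
  have hFmcont : ContinuousOn (fun p : ℝ × ((Fin m ⊕ Fin m) → ℝ) => G p.1 * K * G p.1) S := by
    have houter : Continuous (fun q : (Matrix (Fin m ⊕ Fin m) (Fin m ⊕ Fin m) ℝ) ×
        (Matrix (Fin m ⊕ Fin m) (Fin m ⊕ Fin m) ℝ) => q.1 * K * q.2) :=
      (continuous_fst.matrix_mul continuous_const).matrix_mul continuous_snd
    have h2 := houter.comp_continuousOn (hGcont.prodMk hGcont)
    exact h2
  have hFcont : ContinuousOn (↿Fc) S := by
    have houter : Continuous (fun q : ((Fin m ⊕ Fin m) → ℝ) ×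
        (Matrix (Fin m ⊕ Fin m) (Fin m ⊕ Fin m) ℝ) => q.1 ⬝ᵥ q.2 *ᵥ q.1) :=
      continuous_fst.dotProduct (continuous_snd.matrix_mulVec continuous_fst)
    have h2 := houter.comp_continuousOn (hvcont.continuousOn.prodMk hFmcont)
    exact h2
  have hUC : UniformContinuousOn (↿Fc) (Set.Icc (0:ℝ) 1 ×ˢ E) :=
    (isCompact_Icc.prod hEc).uniformContinuousOn_of_continuous
      (hFcont.mono (Set.prod_mono le_rfl (Set.subset_univ E)))
  have hTU0 : TendstoUniformlyOn Fc (Fc 0) (nhdsWithin 0 (Set.Icc (0:ℝ) 1)) E :=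
    hUC.tendstoUniformlyOn (Set.mem_Icc.mpr ⟨le_rfl, zero_le_one⟩)
  have ht : Tendsto (fun n => (ρ n)⁻¹) atTop (nhdsWithin 0 (Set.Icc (0:ℝ) 1)) := by
    rw [tendsto_nhdsWithin_iff]
    refine ⟨hρ.inv_tendsto_atTop, ?_⟩
    filter_upwards [hρ.eventually_ge_atTop 1] with n hn
    exact ⟨inv_nonneg.mpr (hρpos n).le, inv_le_one_of_one_le₀ hn⟩
  have hTU : TendstoUniformlyOn φ (fun α => α ⬝ᵥ K *ᵥ α) atTop E := by
    rw [← hF0]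
    intro u hu
    filter_upwards [ht.eventually (hTU0 u hu)] with n hn
    rw [hφF n]
    exact hn
  rcases E.eq_empty_or_nonempty with rfl | hne
  · simp only [Set.image_empty, Real.sSup_empty]
    exact tendsto_const_nhds
  · exact aux_sSup_tendsto hne ⟨1, by rintro y ⟨x, hx, rfl⟩; exact hquad x hx⟩ hTU
end
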